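/- Let F_q have characteristic 2 and q ≥ 4. The vector invariant ring F_q[2V]^{O_2^+(F_q)} = F_q[x_1,x_2,y_1,y_2]^{O_2^+(F_q)} is generated as an F_q-algebra by the q+3 invariants N_1 = x_1y_1, N_2 = x_2y_2, U_{12} = x_1y_2 + x_2y_1, and B_k = x_1^k x_2^{q-1-k} + y_1^k y_2^{q-1-k} for 0 ≤ k ≤ q-1. -/

import Mathlib

open MvPolynomial

set_option linter.unusedSectionVars false
set_option maxHeartbeats 1000000

namespace TwoVecAux

variable {F : Type*} [Field F] [Fintype F] [DecidableEq F]

def gens (F : Type*) [Field F] [Fintype F] [DecidableEq F] : Set (MvPolynomial (Fin 4) F) :=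
  insert (X 0 * X 2) (insert (X 1 * X 3) (insert (X 0 * X 3 + X 1 * X 2)
    (Set.range fun k : Fin (Fintype.card F) =>
      X 0 ^ (k : ℕ) * X 1 ^ (Fintype.card F - 1 - (k : ℕ)) +
        X 2 ^ (k : ℕ) * X 3 ^ (Fintype.card F - 1 - (k : ℕ)))))

noncomputable abbrev A (F : Type*) [Field F] [Fintype F] [DecidableEq F] :
    Subalgebra F (MvPolynomial (Fin 4) F) := Algebra.adjoin F (gens F)

lemma hN1 : (X 0 * X 2 : MvPolynomial (Fin 4) F) ∈ A F :=
  Algebra.subset_adjoin (by left; rfl)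

lemma hN2 : (X 1 * X 3 : MvPolynomial (Fin 4) F) ∈ A F :=
  Algebra.subset_adjoin (by right; left; rfl)

lemma hU : (X 0 * X 3 + X 1 * X 2 : MvPolynomial (Fin 4) F) ∈ A F :=
  Algebra.subset_adjoin (by right; right; left; rfl)

lemma hB {a c : ℕ} (h : a + c = Fintype.card F - 1) (hq : 1 ≤ Fintype.card F) :
    (X 0 ^ a * X 1 ^ c + X 2 ^ a * X 3 ^ c : MvPolynomial (Fin 4) F) ∈ A F := by
  apply Algebra.subset_adjoin
  right; right; right
  refine ⟨⟨a, by omega⟩, ?_⟩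
  have h' : Fintype.card F - 1 - a = c := by omega
  simp only [h']

lemma addself (h2 : (2 : F) = 0) (x : MvPolynomial (Fin 4) F) : x + x = 0 := by
  have h : x + x = C ((1 : F) + 1) * x := by rw [map_add, C_1]; ring
  rw [h, show (1 : F) + 1 = 2 from one_add_one_eq_two, h2, map_zero, zero_mul]

lemma flipeq (h2 : (2 : F) = 0) {x y z : MvPolynomial (Fin 4) F} (h : x + y = z) :
    x = z + y := by
  rw [← h, add_assoc, addself h2, add_zero]

/-- `C`-type orbit sum: `x₁^a x₂^b + y₁^a y₂^b`. -/
noncomputable def Cp (F : Type*) [Field F] (a b : ℕ) : MvPolynomial (Fin 4) F :=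
  X 0 ^ a * X 1 ^ b + X 2 ^ a * X 3 ^ b

/-- `D`-type orbit sum: `x₁^a y₂^b + x₂^b y₁^a`. -/
noncomputable def Dp (F : Type*) [Field F] (a b : ℕ) : MvPolynomial (Fin 4) F :=
  X 0 ^ a * X 3 ^ b + X 1 ^ b * X 2 ^ a

lemma keyCD (h2 : (2 : F) = 0) (hq : 4 ≤ Fintype.card F) :
    ∀ r a b : ℕ,
      (2 * (a + b) + 1 ≤ r → (Fintype.card F - 1) ∣ (a + b) → Cp F a b ∈ A F) ∧
      (2 * (a + b) + (if a = 0 ∨ b = 0 then 2 else 0) ≤ r →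
        a ≡ b [MOD Fintype.card F - 1] → Dp F a b ∈ A F) := by
  intro r
  induction r with
  | zero =>
    intro a b
    refine ⟨fun h _ => absurd h (by omega), fun h hm => ?_⟩
    exfalso; split_ifs at h <;> omega
  | succ r ih =>
    set q1 := Fintype.card F - 1 with hq1
    have hp : 3 ≤ q1 := by omega
    have hCpart : ∀ a b : ℕ, 2 * (a + b) + 1 ≤ r + 1 → q1 ∣ (a + b) → Cp F a b ∈ A F := by
      intro a b hr hdvd
      obtain ⟨m, hm⟩ := hdvd
      match m, hm with
      | 0, hm =>
        have ha : a = 0 := by omega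
        have hb : b = 0 := by omega
        subst ha hb
        have h0 : Cp F 0 0 = 0 := by
          have : Cp F 0 0 = 1 + 1 := by simp [Cp]
          rw [this, addself h2 1]
        rw [h0]; exact zero_mem _
      | 1, hm => exact hB (by omega) (by omega)
      | (m + 2), hm =>
        have hm' : a + b = q1 * m + q1 + q1 := by rw [hm]; ring
        clear hm
        by_cases hA : a < q1
        · -- a ≤ q1 - 1 : use B_a
          obtain ⟨c, hc1, hc2⟩ : ∃ c, a + c = q1 ∧ 1 ≤ c := ⟨q1 - a, by omega, by omega⟩
          obtain ⟨e, he⟩ : ∃ e, b = e + 2 * c := ⟨b - 2 * c, by omega⟩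
          have hid : Cp F a b + (X 1 * X 3) ^ c * Dp F a e =
              (X 0 ^ a * X 1 ^ c + X 2 ^ a * X 3 ^ c) * Cp F 0 (c + e) := by
            rw [he]; unfold Cp Dp; ring
          rw [flipeq h2 hid]
          refine add_mem (mul_mem (hB (by omega) (by omega)) ?_) (mul_mem (pow_mem hN2 c) ?_)
          · exact (ih 0 (c + e)).1 (by omega) ⟨m + 1, by rw [Nat.mul_add, Nat.mul_one]; omega⟩
          · refine (ih a e).2 (by split_ifs <;> omega) ?_
            refine Nat.ModEq.add_right_cancel' c ?_
            calc a + c ≡ 0 [MOD q1] := (Nat.modEq_zero_iff_dvd).mpr ⟨1, by omega⟩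
              _ ≡ e + c [MOD q1] := ((Nat.modEq_zero_iff_dvd).mpr ⟨m + 1, by rw [Nat.mul_add, Nat.mul_one]; omega⟩).symm
        · -- a ≥ q1 : use B_{q1}
          obtain ⟨a', ha'⟩ : ∃ a', a = a' + q1 := ⟨a - q1, by omega⟩
          by_cases hA2 : q1 ≤ a'
          · obtain ⟨a'', ha''⟩ : ∃ a'', a' = a'' + q1 := ⟨a' - q1, by omega⟩
            have hid : Cp F a b + (X 0 * X 2) ^ q1 * Cp F a'' b =
                (X 0 ^ q1 * X 1 ^ 0 + X 2 ^ q1 * X 3 ^ 0) * Cp F a' b := by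
              rw [ha', ha'']; unfold Cp; ring
            rw [flipeq h2 hid]
            refine add_mem (mul_mem (hB (by omega) (by omega)) ?_)
              (mul_mem (pow_mem hN1 q1) ?_)
            · exact (ih a' b).1 (by omega) ⟨m + 1, by rw [Nat.mul_add, Nat.mul_one]; omega⟩
            · exact (ih a'' b).1 (by omega) ⟨m, by omega⟩
          · obtain ⟨c, hc1, hc2⟩ : ∃ c, a' + c = q1 ∧ 1 ≤ c := ⟨q1 - a', by omega, by omega⟩
            have hb1 : 1 ≤ b := by omega
            have hid : Cp F a b + (X 0 * X 2) ^ a' * Dp F c b =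
                (X 0 ^ q1 * X 1 ^ 0 + X 2 ^ q1 * X 3 ^ 0) * Cp F a' b := by
              rw [ha', show q1 = a' + c by omega]; unfold Cp Dp; ring
            rw [flipeq h2 hid]
            refine add_mem (mul_mem (hB (by omega) (by omega)) ?_)
              (mul_mem (pow_mem hN1 a') ?_)
            · exact (ih a' b).1 (by omega) ⟨m + 1, by rw [Nat.mul_add, Nat.mul_one]; omega⟩
            · refine (ih c b).2 (by split_ifs <;> omega) ?_
              refine Nat.ModEq.add_left_cancel' a' ?_
              calc a' + c ≡ 0 [MOD q1] := (Nat.modEq_zero_iff_dvd).mpr ⟨1, by omega⟩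
                _ ≡ a' + b [MOD q1] := ((Nat.modEq_zero_iff_dvd).mpr ⟨m + 1, by rw [Nat.mul_add, Nat.mul_one]; omega⟩).symm
    have hDpart : ∀ a b : ℕ,
        2 * (a + b) + (if a = 0 ∨ b = 0 then 2 else 0) ≤ r + 1 →
        a ≡ b [MOD q1] → Dp F a b ∈ A F := by
      intro a b hr hmod
      match a, b with
      | 0, 0 =>
        have h0 : Dp F 0 0 = 0 := by
          have : Dp F 0 0 = 1 + 1 := by simp [Dp]
          rw [this, addself h2 1]
        rw [h0]; exact zero_mem _
      | 0, b + 1 =>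
        have hDC : Dp F 0 (b + 1) = Cp F 0 (b + 1) := by unfold Cp Dp; ring
        rw [if_pos (Or.inl rfl)] at hr
        exact hDC ▸ hCpart 0 (b + 1) (by omega)
          (by simpa using (Nat.modEq_zero_iff_dvd).mp hmod.symm)
      | a + 1, 0 =>
        have hDC : Dp F (a + 1) 0 = Cp F (a + 1) 0 := by unfold Cp Dp; ring
        rw [if_pos (Or.inr rfl)] at hr
        exact hDC ▸ hCpart (a + 1) 0 (by omega)
          (by simpa using (Nat.modEq_zero_iff_dvd).mp hmod)
      | 1, 1 =>
        have h1 : Dp F 1 1 = X 0 * X 3 + X 1 * X 2 := by unfold Dp; ring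
        rw [h1]; exact hU
      | a + 2, 1 =>
        rw [if_neg (by omega)] at hr
        have hmod' : a + 1 ≡ 0 [MOD q1] :=
          Nat.ModEq.add_right_cancel' 1 (by simpa [Nat.add_assoc] using hmod)
        have hid : Dp F (a + 2) 1 + (X 0 * X 2) * Cp F a 1 =
            (X 0 * X 3 + X 1 * X 2) * Dp F (a + 1) 0 := by unfold Cp Dp; ring
        rw [flipeq h2 hid]
        refine add_mem (mul_mem hU ?_) (mul_mem hN1 ?_)
        · exact (ih (a + 1) 0).2 (by split_ifs <;> omega) hmod'
        · exact hCpart a 1 (by omega) (by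
            have := (Nat.modEq_zero_iff_dvd).mp hmod'
            simpa [Nat.add_comm] using this)
      | 1, b + 2 =>
        rw [if_neg (by omega)] at hr
        have hmod' : b + 1 ≡ 0 [MOD q1] := by
          have : (0 : ℕ) + 1 ≡ (b + 1) + 1 [MOD q1] := by simpa [Nat.add_assoc] using hmod
          exact (Nat.ModEq.add_right_cancel' 1 this).symm
        have hid : Dp F 1 (b + 2) + (X 1 * X 3) * Cp F 1 b =
            (X 0 * X 3 + X 1 * X 2) * Dp F 0 (b + 1) := by unfold Cp Dp; ring
        rw [flipeq h2 hid]
        refine add_mem (mul_mem hU ?_) (mul_mem hN2 ?_)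
        · exact (ih 0 (b + 1)).2 (by split_ifs <;> omega) hmod'.symm
        · exact hCpart 1 b (by omega) (by
            have := (Nat.modEq_zero_iff_dvd).mp hmod'
            simpa [Nat.add_comm] using this)
      | a + 2, b + 2 =>
        rw [if_neg (by omega)] at hr
        have hmod1 : a + 1 ≡ b + 1 [MOD q1] :=
          Nat.ModEq.add_right_cancel' 1 (by simpa [Nat.add_assoc] using hmod)
        have hmod2 : a ≡ b [MOD q1] := Nat.ModEq.add_right_cancel' 1 hmod1
        have hid : Dp F (a + 2) (b + 2) + (X 0 * X 2) * (X 1 * X 3) * Dp F a b =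
            (X 0 * X 3 + X 1 * X 2) * Dp F (a + 1) (b + 1) := by unfold Dp; ring
        rw [flipeq h2 hid]
        refine add_mem (mul_mem hU ?_) (mul_mem (mul_mem hN1 hN2) ?_)
        · exact (ih (a + 1) (b + 1)).2 (by split_ifs <;> omega) hmod1
        · exact (ih a b).2 (by split_ifs <;> omega) hmod2
    exact fun a b => ⟨hCpart a b, hDpart a b⟩

lemma hCmem (c : F) : (C c : MvPolynomial (Fin 4) F) ∈ A F := by
  rw [← MvPolynomial.algebraMap_eq]; exact Subalgebra.algebraMap_mem _ c

lemma keyP (h2 : (2 : F) = 0) (hq : 4 ≤ Fintype.card F) :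
    ∀ n a1 a2 b1 b2 : ℕ, a1 + a2 + b1 + b2 ≤ n →
      a1 + a2 ≡ b1 + b2 [MOD Fintype.card F - 1] →
      (X 0 ^ a1 * X 1 ^ a2 * X 2 ^ b1 * X 3 ^ b2 +
        X 0 ^ b1 * X 1 ^ b2 * X 2 ^ a1 * X 3 ^ a2 : MvPolynomial (Fin 4) F) ∈ A F := by
  intro n
  induction n with
  | zero =>
    intro a1 a2 b1 b2 h hm
    have ha1 : a1 = 0 := by omega
    have ha2 : a2 = 0 := by omega
    have hb1 : b1 = 0 := by omega
    have hb2 : b2 = 0 := by omega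
    subst ha1 ha2 hb1 hb2
    have h0 : (X 0 ^ 0 * X 1 ^ 0 * X 2 ^ 0 * X 3 ^ 0 +
        X 0 ^ 0 * X 1 ^ 0 * X 2 ^ 0 * X 3 ^ 0 : MvPolynomial (Fin 4) F) = 1 + 1 := by
      simp
    rw [h0, addself h2 1]; exact zero_mem _
  | succ n ih =>
    intro a1 a2 b1 b2 hn hm
    by_cases h1 : 1 ≤ a1 ∧ 1 ≤ b1
    · obtain ⟨a1', rfl⟩ : ∃ t, a1 = t + 1 := ⟨a1 - 1, by omega⟩
      obtain ⟨b1', rfl⟩ : ∃ t, b1 = t + 1 := ⟨b1 - 1, by omega⟩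
      rw [Nat.add_right_comm a1' 1 a2, Nat.add_right_comm b1' 1 b2] at hm
      have hm' := Nat.ModEq.add_right_cancel' 1 hm
      have hid : (X 0 ^ (a1' + 1) * X 1 ^ a2 * X 2 ^ (b1' + 1) * X 3 ^ b2 +
          X 0 ^ (b1' + 1) * X 1 ^ b2 * X 2 ^ (a1' + 1) * X 3 ^ a2 : MvPolynomial (Fin 4) F) =
          (X 0 * X 2) * (X 0 ^ a1' * X 1 ^ a2 * X 2 ^ b1' * X 3 ^ b2 +
            X 0 ^ b1' * X 1 ^ b2 * X 2 ^ a1' * X 3 ^ a2) := by ring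
      rw [hid]
      exact mul_mem hN1 (ih a1' a2 b1' b2 (by omega) hm')
    · by_cases h2' : 1 ≤ a2 ∧ 1 ≤ b2
      · obtain ⟨a2', rfl⟩ : ∃ t, a2 = t + 1 := ⟨a2 - 1, by omega⟩
        obtain ⟨b2', rfl⟩ : ∃ t, b2 = t + 1 := ⟨b2 - 1, by omega⟩
        have hm' := Nat.ModEq.add_right_cancel' 1 hm
        have hid : (X 0 ^ a1 * X 1 ^ (a2' + 1) * X 2 ^ b1 * X 3 ^ (b2' + 1) +
            X 0 ^ b1 * X 1 ^ (b2' + 1) * X 2 ^ a1 * X 3 ^ (a2' + 1) : MvPolynomial (Fin 4) F) =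
            (X 1 * X 3) * (X 0 ^ a1 * X 1 ^ a2' * X 2 ^ b1 * X 3 ^ b2' +
              X 0 ^ b1 * X 1 ^ b2' * X 2 ^ a1 * X 3 ^ a2') := by ring
        rw [hid]
        exact mul_mem hN2 (ih a1 a2' b1 b2' (by omega) hm')
      · have hc1 : a1 = 0 ∨ b1 = 0 := by omega
        have hc2 : a2 = 0 ∨ b2 = 0 := by omega
        rcases hc1 with rfl | rfl <;> rcases hc2 with rfl | rfl
        · -- a1 = 0, a2 = 0 : Cp b1 b2
          have hid : (X 0 ^ 0 * X 1 ^ 0 * X 2 ^ b1 * X 3 ^ b2 +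
              X 0 ^ b1 * X 1 ^ b2 * X 2 ^ 0 * X 3 ^ 0 : MvPolynomial (Fin 4) F) = Cp F b1 b2 := by
            unfold Cp; ring
          rw [hid]
          exact (keyCD h2 hq (2 * (b1 + b2) + 1) b1 b2).1 le_rfl
            ((Nat.modEq_zero_iff_dvd).mp (by simpa using hm.symm))
        · -- a1 = 0, b2 = 0 : Dp b1 a2
          have hid : (X 0 ^ 0 * X 1 ^ a2 * X 2 ^ b1 * X 3 ^ 0 +
              X 0 ^ b1 * X 1 ^ 0 * X 2 ^ 0 * X 3 ^ a2 : MvPolynomial (Fin 4) F) = Dp F b1 a2 := by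
            unfold Dp; ring
          rw [hid]
          exact (keyCD h2 hq (2 * (b1 + a2) + 2) b1 a2).2 (by split_ifs <;> omega)
            (by simpa using hm.symm)
        · -- b1 = 0, a2 = 0 : Dp a1 b2
          have hid : (X 0 ^ a1 * X 1 ^ 0 * X 2 ^ 0 * X 3 ^ b2 +
              X 0 ^ 0 * X 1 ^ b2 * X 2 ^ a1 * X 3 ^ 0 : MvPolynomial (Fin 4) F) = Dp F a1 b2 := by
            unfold Dp; ring
          rw [hid]
          exact (keyCD h2 hq (2 * (a1 + b2) + 2) a1 b2).2 (by split_ifs <;> omega)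
            (by simpa using hm)
        · -- b1 = 0, b2 = 0 : Cp a1 a2
          have hid : (X 0 ^ a1 * X 1 ^ a2 * X 2 ^ 0 * X 3 ^ 0 +
              X 0 ^ 0 * X 1 ^ 0 * X 2 ^ a1 * X 3 ^ a2 : MvPolynomial (Fin 4) F) = Cp F a1 a2 := by
            unfold Cp; ring
          rw [hid]
          exact (keyCD h2 hq (2 * (a1 + a2) + 1) a1 a2).1 le_rfl
            ((Nat.modEq_zero_iff_dvd).mp (by simpa using hm))

def pperm : Fin 4 → Fin 4 := ![2, 3, 0, 1]

lemma pperm_pperm : ∀ i, pperm (pperm i) = i := by decide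

lemma pperm_inj : Function.Injective pperm := by decide

lemma sigma_eq (f : MvPolynomial (Fin 4) F) :
    aeval (R := F) (![X 2, X 3, X 0, X 1] : Fin 4 → MvPolynomial (Fin 4) F) f =
      rename pperm f := by
  have h : (X ∘ pperm : Fin 4 → MvPolynomial (Fin 4) F) = ![X 2, X 3, X 0, X 1] := by
    funext i; fin_cases i <;> rfl
  rw [show rename (R := F) pperm f = aeval (X ∘ pperm) f from by
    clear h; induction f using MvPolynomial.induction_on <;> simp_all, h]

lemma md_invol (d : Fin 4 →₀ ℕ) :
    Finsupp.mapDomain pperm (Finsupp.mapDomain pperm d) = d := by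
  rw [← Finsupp.mapDomain_comp, show pperm ∘ pperm = id from funext pperm_pperm,
    Finsupp.mapDomain_id]

lemma md_apply (d : Fin 4 →₀ ℕ) (i : Fin 4) :
    Finsupp.mapDomain pperm d (pperm i) = d i :=
  Finsupp.mapDomain_apply pperm_inj d i

/-- The scaling substitution `τ_a`. -/
noncomputable def tv (a : Fˣ) : Fin 4 → MvPolynomial (Fin 4) F :=
  ![C ((a : F)⁻¹) * X 0, C ((a : F)⁻¹) * X 1, C ((a : F)) * X 2, C ((a : F)) * X 3]

lemma monomial_prod (d : Fin 4 →₀ ℕ) (c : F) :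
    (monomial d c : MvPolynomial (Fin 4) F) =
      C c * X 0 ^ d 0 * X 1 ^ d 1 * X 2 ^ d 2 * X 3 ^ d 3 := by
  rw [monomial_eq, Finsupp.prod_fintype _ _ (fun i => pow_zero _), Fin.prod_univ_four]
  ring

lemma tau_monomial (a : Fˣ) (d : Fin 4 →₀ ℕ) (c : F) :
    aeval (tv a) (monomial d c) =
      monomial d (((a : F)⁻¹) ^ (d 0 + d 1) * (a : F) ^ (d 2 + d 3) * c) := by
  rw [monomial_prod, monomial_prod, map_mul, map_mul, map_mul, map_mul, map_pow, map_pow,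
    map_pow, map_pow, aeval_C, aeval_X, aeval_X, aeval_X, aeval_X]
  show (algebraMap F (MvPolynomial (Fin 4) F) c) * (C ((a : F)⁻¹) * X 0) ^ d 0 *
      (C ((a : F)⁻¹) * X 1) ^ d 1 * (C ((a : F)) * X 2) ^ d 2 * (C ((a : F)) * X 3) ^ d 3 = _
  rw [MvPolynomial.algebraMap_eq]
  simp only [map_mul, map_pow, pow_add, mul_pow]
  ring

lemma coeff_tau (a : Fˣ) (f : MvPolynomial (Fin 4) F) (d : Fin 4 →₀ ℕ) :
    coeff d (aeval (tv a) f) =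
      ((a : F)⁻¹) ^ (d 0 + d 1) * (a : F) ^ (d 2 + d 3) * coeff d f := by
  conv_lhs => rw [f.as_sum, map_sum]
  rw [coeff_sum]
  simp_rw [tau_monomial, coeff_monomial]
  rw [Finset.sum_ite_eq' f.support d]
  by_cases hd : d ∈ f.support
  · rw [if_pos hd]
  · rw [if_neg hd, notMem_support_iff.mp hd, mul_zero]

lemma pow_eq_mod (a : Fˣ) {m n : ℕ} (h : m ≡ n [MOD Fintype.card F - 1]) :
    (a : F) ^ m = (a : F) ^ n := by
  have hdvd : orderOf a ∣ Fintype.card F - 1 := by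
    rw [← Fintype.card_units]; exact orderOf_dvd_card
  have hu : a ^ m = a ^ n := pow_eq_pow_iff_modEq.mpr (h.of_dvd hdvd)
  exact_mod_cast congrArg (Units.val) hu

lemma tau_fix_monomial (a : Fˣ) {d : Fin 4 →₀ ℕ} (c : F)
    (hw : d 0 + d 1 ≡ d 2 + d 3 [MOD Fintype.card F - 1]) :
    aeval (tv a) (monomial d c) = monomial d c := by
  rw [tau_monomial]
  congr 1
  rw [← pow_eq_mod a hw, inv_pow, inv_mul_cancel₀ (pow_ne_zero _ (Units.ne_zero a)), one_mul]

lemma support_weight (f : MvPolynomial (Fin 4) F)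
    (hτ : ∀ a : Fˣ, aeval (tv a) f = f) {d : Fin 4 →₀ ℕ} (hd : coeff d f ≠ 0) :
    d 0 + d 1 ≡ d 2 + d 3 [MOD Fintype.card F - 1] := by
  obtain ⟨g, hg⟩ := IsCyclic.exists_generator (α := Fˣ)
  have hord : orderOf g = Fintype.card F - 1 := by
    rw [orderOf_eq_card_of_forall_mem_zpowers hg, Nat.card_eq_fintype_card, Fintype.card_units]
  have h1 : ((g : F)⁻¹) ^ (d 0 + d 1) * (g : F) ^ (d 2 + d 3) * coeff d f = coeff d f := by
    rw [← coeff_tau g f d, hτ g]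
  have h2 : ((g : F)⁻¹) ^ (d 0 + d 1) * (g : F) ^ (d 2 + d 3) = 1 :=
    mul_right_cancel₀ hd (h1.trans (one_mul (coeff d f)).symm)
  rw [inv_pow] at h2
  have h3 : (g : F) ^ (d 0 + d 1) = (g : F) ^ (d 2 + d 3) :=
    (inv_mul_eq_one₀ (pow_ne_zero _ (Units.ne_zero g))).mp h2
  have h4 : g ^ (d 0 + d 1) = g ^ (d 2 + d 3) := Units.ext (by push_cast; exact h3)
  exact hord ▸ pow_eq_pow_iff_modEq.mp h4

lemma ccself (h2 : (2 : F) = 0) (x : F) : x + x = 0 := by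
  rw [← two_mul, h2, zero_mul]

lemma invariant_mem (h2 : (2 : F) = 0) (hq : 4 ≤ Fintype.card F) :
    ∀ n (f : MvPolynomial (Fin 4) F), f.support.card ≤ n →
      rename pperm f = f → (∀ a : Fˣ, aeval (tv a) f = f) → f ∈ A F := by
  intro n
  induction n with
  | zero =>
    intro f h _ _
    have hf : f = 0 := support_eq_empty.mp (Finset.card_eq_zero.mp (Nat.le_zero.mp h))
    rw [hf]; exact zero_mem _
  | succ n ih =>
    intro f hcard hσ hτ
    by_cases hf : f = 0
    · rw [hf]; exact zero_mem _
    · obtain ⟨d, hd⟩ : f.support.Nonempty :=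
        Finset.nonempty_iff_ne_empty.mpr (fun h => hf (support_eq_empty.mp h))
      have hc0 : coeff d f ≠ 0 := mem_support_iff.mp hd
      set c := coeff d f with hc
      have hw : d 0 + d 1 ≡ d 2 + d 3 [MOD Fintype.card F - 1] := support_weight f hτ hc0
      set e := Finsupp.mapDomain pperm d with he
      have he0 : e 0 = d 2 := by
        have := md_apply d 2; rwa [show pperm 2 = 0 from rfl] at this
      have he1 : e 1 = d 3 := by
        have := md_apply d 3; rwa [show pperm 3 = 1 from rfl] at this
      have he2 : e 2 = d 0 := by
        have := md_apply d 0; rwa [show pperm 0 = 2 from rfl] at this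
      have he3 : e 3 = d 1 := by
        have := md_apply d 1; rwa [show pperm 1 = 3 from rfl] at this
      have hwe : e 0 + e 1 ≡ e 2 + e 3 [MOD Fintype.card F - 1] := by
        rw [he0, he1, he2, he3]; exact hw.symm
      have hce : coeff e f = c := by
        have h' := coeff_rename_mapDomain pperm pperm_inj f d
        rwa [hσ] at h'
      by_cases hed : e = d
      · -- self-paired monomial
        have hd02 : d 2 = d 0 := by rw [← he0, hed]
        have hd13 : d 3 = d 1 := by rw [← he1, hed]
        have hmonA : (monomial d c : MvPolynomial (Fin 4) F) ∈ A F := by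
          have hmon : (monomial d c : MvPolynomial (Fin 4) F) =
              C c * (X 0 * X 2) ^ d 0 * (X 1 * X 3) ^ d 1 := by
            rw [monomial_prod, hd02, hd13]; ring
          rw [hmon]
          exact mul_mem (mul_mem (hCmem c) (pow_mem hN1 _)) (pow_mem hN2 _)
        set g := f + monomial d c with hg
        have hσg : rename pperm g = g := by
          rw [hg, map_add, hσ, rename_monomial, ← he, hed]
        have hτg : ∀ a : Fˣ, aeval (tv a) g = g := fun a => by
          rw [hg, map_add, hτ a, tau_fix_monomial a c hw]
        have hsub : g.support ⊆ f.support.erase d := by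
          intro d' hd'
          have hne : d' ≠ d := by
            intro hdd; subst hdd
            have : coeff d' g = 0 := by
              rw [hg, coeff_add, coeff_monomial, if_pos rfl, ← hc, ccself h2]
            exact mem_support_iff.mp hd' this
          refine Finset.mem_erase.mpr ⟨hne, mem_support_iff.mpr ?_⟩
          have hco : coeff d' g = coeff d' f := by
            rw [hg, coeff_add, coeff_monomial, if_neg (fun h => hne h.symm), add_zero]
          rw [← hco]; exact mem_support_iff.mp hd'
        have hgcard : g.support.card ≤ n := by
          have := Finset.card_le_card hsub
          have h2' := Finset.card_erase_of_mem hd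
          omega
        have hgA := ih g hgcard hσg hτg
        have hfg : f = g + monomial d c := by
          rw [hg, add_assoc, addself h2, add_zero]
        rw [hfg]; exact add_mem hgA hmonA
      · -- genuine pair
        have hosA : (monomial d c + monomial e c : MvPolynomial (Fin 4) F) ∈ A F := by
          have hP := keyP h2 hq (d 0 + d 1 + d 2 + d 3) (d 0) (d 1) (d 2) (d 3) le_rfl hw
          have hid : (monomial d c + monomial e c : MvPolynomial (Fin 4) F) =
              C c * (X 0 ^ d 0 * X 1 ^ d 1 * X 2 ^ d 2 * X 3 ^ d 3 +
                X 0 ^ d 2 * X 1 ^ d 3 * X 2 ^ d 0 * X 3 ^ d 1) := by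
            rw [monomial_prod d, monomial_prod e, he0, he1, he2, he3]; ring
          rw [hid]; exact mul_mem (hCmem c) hP
        set g := f + (monomial d c + monomial e c) with hg
        have hσg : rename pperm g = g := by
          rw [hg, map_add, hσ, map_add, rename_monomial, rename_monomial, ← he,
            show Finsupp.mapDomain pperm e = d from by rw [he, md_invol], add_comm (monomial e c)]
        have hτg : ∀ a : Fˣ, aeval (tv a) g = g := fun a => by
          rw [hg, map_add, hτ a, map_add, tau_fix_monomial a c hw, tau_fix_monomial a c hwe]
        have hcdg : coeff d g = 0 := by
          rw [hg, coeff_add, coeff_add, coeff_monomial, if_pos rfl, coeff_monomial,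
            if_neg hed, add_zero, ← hc, ccself h2]
        have hceg : coeff e g = 0 := by
          rw [hg, coeff_add, coeff_add, coeff_monomial, if_neg (fun h => hed h.symm),
            coeff_monomial, if_pos rfl, zero_add, hce, ccself h2]
        have hsub : g.support ⊆ f.support.erase d := by
          intro d' hd'
          have hne : d' ≠ d := fun hdd => mem_support_iff.mp hd' (by rw [hdd]; exact hcdg)
          have hnee : d' ≠ e := fun hdd => mem_support_iff.mp hd' (by rw [hdd]; exact hceg)
          refine Finset.mem_erase.mpr ⟨hne, mem_support_iff.mpr ?_⟩
          have hco : coeff d' g = coeff d' f := by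
            rw [hg, coeff_add, coeff_add, coeff_monomial, if_neg (fun h => hne h.symm),
              coeff_monomial, if_neg (fun h => hnee h.symm), add_zero, add_zero]
          rw [← hco]; exact mem_support_iff.mp hd'
        have hgcard : g.support.card ≤ n := by
          have := Finset.card_le_card hsub
          have h2' := Finset.card_erase_of_mem hd
          omega
        have hgA := ih g hgcard hσg hτg
        have hfg : f = g + (monomial d c + monomial e c) := by
          rw [hg, add_assoc, addself h2, add_zero]
        rw [hfg]; exact add_mem hgA hosA


lemma sigma_gens : ∀ x ∈ gens F,
    aeval (R := F) (![X 2, X 3, X 0, X 1] : Fin 4 → MvPolynomial (Fin 4) F) x = x := by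
  intro x hx
  simp only [gens, Set.mem_insert_iff, Set.mem_range] at hx
  rcases hx with rfl | rfl | rfl | ⟨k, rfl⟩ <;>
    simp only [map_add, map_mul, map_pow, aeval_X, Matrix.cons_val_zero, Matrix.cons_val_one,
      Matrix.head_cons, Matrix.cons_val_two, Matrix.tail_cons, Matrix.cons_val_three] <;>
    ring

lemma tau_gens (hq : 4 ≤ Fintype.card F) (a : Fˣ) : ∀ x ∈ gens F,
    aeval (R := F) (tv a) x = x := by
  have hne : (a : F) ≠ 0 := Units.ne_zero a
  have hinv : ((a : F)⁻¹) * (a : F) = 1 := inv_mul_cancel₀ hne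
  intro x hx
  simp only [gens, Set.mem_insert_iff, Set.mem_range] at hx
  rcases hx with rfl | rfl | rfl | ⟨k, rfl⟩ <;>
    simp only [map_add, map_mul, map_pow, aeval_X, tv, Matrix.cons_val_zero, Matrix.cons_val_one,
      Matrix.head_cons, Matrix.cons_val_two, Matrix.tail_cons, Matrix.cons_val_three]
  · rw [mul_mul_mul_comm, ← map_mul, hinv, map_one, one_mul]
  · rw [mul_mul_mul_comm, ← map_mul, hinv, map_one, one_mul]
  · rw [mul_mul_mul_comm, mul_mul_mul_comm (C ((a : F)⁻¹)) (X 1), ← map_mul, hinv, map_one,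
      one_mul, one_mul]
  · have hkm : (k : ℕ) + (Fintype.card F - 1 - (k : ℕ)) = Fintype.card F - 1 := by
      have := k.isLt; omega
    have e1 : ((a : F)⁻¹) ^ (k : ℕ) * ((a : F)⁻¹) ^ (Fintype.card F - 1 - (k : ℕ)) = 1 := by
      rw [← pow_add, hkm, FiniteField.pow_card_sub_one_eq_one _ (inv_ne_zero hne)]
    have e2 : ((a : F)) ^ (k : ℕ) * ((a : F)) ^ (Fintype.card F - 1 - (k : ℕ)) = 1 := by
      rw [← pow_add, hkm, FiniteField.pow_card_sub_one_eq_one _ hne]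
    calc ((C ((a : F)⁻¹) * X 0 : MvPolynomial (Fin 4) F)) ^ (k : ℕ) *
          (C ((a : F)⁻¹) * X 1) ^ (Fintype.card F - 1 - (k : ℕ)) +
        (C ((a : F)) * X 2) ^ (k : ℕ) * (C ((a : F)) * X 3) ^ (Fintype.card F - 1 - (k : ℕ))
        = C (((a : F)⁻¹) ^ (k : ℕ) * ((a : F)⁻¹) ^ (Fintype.card F - 1 - (k : ℕ))) *
            (X 0 ^ (k : ℕ) * X 1 ^ (Fintype.card F - 1 - (k : ℕ))) +
          C (((a : F)) ^ (k : ℕ) * ((a : F)) ^ (Fintype.card F - 1 - (k : ℕ))) *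
            (X 2 ^ (k : ℕ) * X 3 ^ (Fintype.card F - 1 - (k : ℕ))) := by
          simp only [map_mul, map_pow, mul_pow]; ring
      _ = X 0 ^ (k : ℕ) * X 1 ^ (Fintype.card F - 1 - (k : ℕ)) +
          X 2 ^ (k : ℕ) * X 3 ^ (Fintype.card F - 1 - (k : ℕ)) := by
          rw [e1, e2, map_one, one_mul, one_mul]

end TwoVecAux

open TwoVecAux in
/-- Over `F_q` of characteristic 2 with `q ≥ 4`, a polynomial
`f ∈ F_q[x₁,x₂,y₁,y₂]` is `O₂⁺(F_q)`-invariant (invariant under the swap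
`σ : x_i ↔ y_i` and all `τ_a : x_i ↦ a⁻¹x_i, y_i ↦ a·y_i`) if and only if `f`
lies in the `F_q`-subalgebra generated by `N₁ = x₁y₁`, `N₂ = x₂y₂`,
`U₁₂ = x₁y₂ + x₂y₁` and `B_k = x₁^k x₂^{q-1-k} + y₁^k y₂^{q-1-k}` for
`0 ≤ k ≤ q-1`.  Here `x₁ = X 0`, `x₂ = X 1`, `y₁ = X 2`, `y₂ = X 3`. -/
theorem two_vector_invariants (F : Type*) [Field F] [Fintype F] [DecidableEq F]
    (hchar : ringChar F = 2) (h4 : 4 ≤ Fintype.card F)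
    (f : MvPolynomial (Fin 4) F) :
    (aeval (R := F) (![X 2, X 3, X 0, X 1] : Fin 4 → MvPolynomial (Fin 4) F) f = f ∧
        ∀ a : Fˣ,
          aeval (R := F)
            (![C ((a : F)⁻¹) * X 0, C ((a : F)⁻¹) * X 1,
               C ((a : F)) * X 2, C ((a : F)) * X 3] : Fin 4 → MvPolynomial (Fin 4) F) f = f) ↔
      f ∈ Algebra.adjoin F
        (insert (X 0 * X 2) (insert (X 1 * X 3) (insert (X 0 * X 3 + X 1 * X 2)
          (Set.range fun k : Fin (Fintype.card F) =>
            X 0 ^ (k : ℕ) * X 1 ^ (Fintype.card F - 1 - (k : ℕ)) +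
              X 2 ^ (k : ℕ) * X 3 ^ (Fintype.card F - 1 - (k : ℕ)))))) := by
  haveI : CharP F 2 := hchar ▸ ringChar.charP F
  have h2 : (2 : F) = 0 := by exact_mod_cast (CharP.cast_eq_zero F 2)
  constructor
  · rintro ⟨hσ, hτ⟩
    have hmem : f ∈ A F := by
      refine invariant_mem h2 h4 f.support.card f le_rfl ?_ ?_
      · rw [← sigma_eq]; exact hσ
      · exact fun a => hτ a
    exact hmem
  · intro hmem
    have hmem' : f ∈ A F := hmem
    constructor
    · have hle : A F ≤ AlgHom.equalizer
          (aeval (R := F) (![X 2, X 3, X 0, X 1] : Fin 4 → MvPolynomial (Fin 4) F))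
          (AlgHom.id F (MvPolynomial (Fin 4) F)) := by
        apply Algebra.adjoin_le
        intro x hx
        rw [SetLike.mem_coe, AlgHom.mem_equalizer]
        exact sigma_gens x hx
      exact hle hmem'
    · intro a
      have hle : A F ≤ AlgHom.equalizer (aeval (R := F) (tv a))
          (AlgHom.id F (MvPolynomial (Fin 4) F)) := by
        apply Algebra.adjoin_le
        intro x hx
        rw [SetLike.mem_coe, AlgHom.mem_equalizer]
        exact tau_gens h4 a x hx
      exact hle hmem'
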